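/- Let H1 and H2 be finite-dimensional complex Hilbert spaces, let a_1,...,a_n ∈ H1 be linearly independent, let b_1,...,b_n ∈ H2 be non-collinear unit vectors, and let s_1,...,s_n be complex numbers. If Σ_{j=1}^{n} s_j (a_j ⊗ b_j) = α ⊗ β for some α ∈ H1 and β ∈ H2 with α ⊗ β ≠ 0, then there is exactly one index j ∈ {1,...,n} with s_j ≠ 0. -/

import Mathlib

open scoped TensorProduct

/-- Two vectors are collinear iff one is a unimodular complex multiple of the other. -/
def IsCollinear {H : Type*} [AddCommGroup H] [Module ℂ H] (u v : H) : Prop :=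
  ∃ c : ℂ, ‖c‖ = 1 ∧ u = c • v

/-- dual family for a linearly independent family over a field -/
lemma exists_dual_family {K V : Type*} [Field K] [AddCommGroup V] [Module K V]
    {n : ℕ} {a : Fin n → V} (hali : LinearIndependent K a) :
    ∃ f : Fin n → (V →ₗ[K] K), ∀ i j, f i (a j) = if i = j then 1 else 0 := by
  classical
  have hsub := hali.linearIndepOn_id
  set B := Module.Basis.extend hsub with hB
  have hmem : ∀ i, a i ∈ hsub.extend (Set.subset_univ _) := fun i =>
    hsub.subset_extend _ ⟨i, rfl⟩
  refine ⟨fun i => B.coord ⟨a i, hmem i⟩, fun i j => ?_⟩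
  have : a j = B ⟨a j, hmem j⟩ := (Module.Basis.extend_apply_self hsub ⟨a j, hmem j⟩).symm
  rw [this, Module.Basis.coord_apply, Module.Basis.repr_self, Finsupp.single_apply]
  by_cases h : i = j
  · simp [h]
  · have : (⟨a j, hmem j⟩ : hsub.extend (Set.subset_univ _)) ≠ ⟨a i, hmem i⟩ := by
      simp only [ne_eq, Subtype.mk.injEq]
      exact fun hc => h (hali.injective hc.symm)
    simp [this, h]

/-- With `a_j` linearly independent and `b_j` non-collinear unit vectors, if
`Σ_j s_j (a_j ⊗ b_j)` is a nonzero factorable vector `α ⊗ β` of `H1 ⊗ H2`, then exactly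
one of the coefficients `s_j` is nonzero. -/
theorem factorable_iff_one_nonzero_coeff
    {H1 H2 : Type*}
    [NormedAddCommGroup H1] [InnerProductSpace ℂ H1] [FiniteDimensional ℂ H1]
    [NormedAddCommGroup H2] [InnerProductSpace ℂ H2] [FiniteDimensional ℂ H2]
    {n : ℕ} (a : Fin n → H1) (b : Fin n → H2) (s : Fin n → ℂ)
    (hali : LinearIndependent ℂ a)
    (hb1 : ∀ j, ‖b j‖ = 1)
    (hbnc : ∀ i j, i ≠ j → ¬ IsCollinear (b i) (b j))
    (α : H1) (β : H2)
    (hfac : ∑ j, s j • (a j ⊗ₜ[ℂ] b j) = α ⊗ₜ[ℂ] β)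
    (hne : α ⊗ₜ[ℂ] β ≠ 0) :
    ∃! j : Fin n, s j ≠ 0 := by
  classical
  obtain ⟨f, hf⟩ := exists_dual_family hali
  -- the maps L i : H1 ⊗ H2 → H2, x ⊗ y ↦ f i x • y
  set L : Fin n → (H1 ⊗[ℂ] H2 →ₗ[ℂ] H2) :=
    fun i => TensorProduct.lift ((LinearMap.lsmul ℂ H2).comp (f i)) with hL
  have hLtmul : ∀ i (x : H1) (y : H2), L i (x ⊗ₜ[ℂ] y) = f i x • y := fun i x y => rfl
  have key : ∀ i, s i • b i = f i α • β := by
    intro i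
    have := congrArg (L i) hfac
    rw [map_sum] at this
    simp only [map_smul, hLtmul, hf] at this
    rwa [Finset.sum_eq_single i (fun j _ hj => by simp [Ne.symm hj])
      (fun h => absurd (Finset.mem_univ i) h), if_pos rfl, one_smul] at this
  -- existence of a nonzero coefficient
  have hex : ∃ i, s i ≠ 0 := by
    by_contra h
    push_neg at h
    apply hne
    rw [← hfac]
    simp [h]
  obtain ⟨i, hi⟩ := hex
  refine ⟨i, hi, fun j hj => ?_⟩
  by_contra hij
  -- otherwise b i and b j are unimodular multiples of each other
  have hbne : ∀ k, b k ≠ 0 := fun k => by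
    intro h; have := hb1 k; rw [h, norm_zero] at this; norm_num at this
  have hci : b i = (f i α / s i) • β := by
    rw [← inv_smul_smul₀ hi (b i), key i, smul_smul, inv_mul_eq_div]
  have hcj : b j = (f j α / s j) • β := by
    rw [← inv_smul_smul₀ hj (b j), key j, smul_smul, inv_mul_eq_div]
  have hcjne : f j α / s j ≠ 0 := by
    intro h; exact hbne j (by rw [hcj, h, zero_smul])
  set c : ℂ := (f i α / s i) / (f j α / s j) with hc
  have hbij : b i = c • b j := by
    rw [hcj, smul_smul, hc, div_mul_cancel₀ _ hcjne, hci]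
  have habs : ‖c‖ = 1 := by
    have h1 := hb1 i
    rw [hbij, norm_smul, hb1 j, mul_one] at h1
    exact h1
  exact hbnc i j (fun h => hij h.symm) ⟨c, habs, hbij⟩
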